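/- Let ℓ ≥ 1 and 1 ≤ κ ≤ ℓ+1 be integers, and define r_j^{[κ]} = j for 1 ≤ j ≤ κ-1 and r_j^{[κ]} = j+1 for κ ≤ j ≤ ℓ. Then ∏_{1 ≤ i_1 < i_2 ≤ ℓ} (r_{i_2}^{[κ]} - r_{i_1}^{[κ]}) = C(ℓ, κ-1) · ∏_{j=1}^{ℓ-1} j!. -/

import Mathlib

/-- The sequence `r^{[κ]}`: the integers `1, …, ℓ+1` with the value `κ` omitted;
`rseq κ j = j` for `j < κ` and `j + 1` otherwise (applied to 1-indexed positions). -/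
def rseq (κ : ℕ) (j : ℕ) : ℕ := if j < κ then j else j + 1


lemma rseq_shift (κ j : ℕ) : rseq κ (j+2) = rseq (κ-1) (j+1) + 1 := by
  simp only [rseq]; split_ifs <;> omega

lemma rseq_prod_aux : ∀ ℓ m : ℕ, 1 ≤ m → m ≤ ℓ + 1 →
    m * ∏ j : Fin ℓ, rseq m ((j:ℕ)+1) = (ℓ+1).factorial := by
  intro ℓ
  induction ℓ with
  | zero => intro m h1 h2; interval_cases m; simp [Nat.factorial]
  | succ n ih =>
    intro m h1 h2
    rw [Fin.prod_univ_castSucc]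
    rcases Nat.lt_or_ge m (n+2) with hm | hm
    · have : rseq m ((Fin.last n : ℕ)+1) = n + 2 := by
        simp only [rseq, Fin.val_last]; rw [if_neg] <;> omega
      rw [this, ← mul_assoc]
      simp only [Fin.coe_castSucc]
      rw [ih m h1 (by omega), Nat.factorial_succ (n+1)]
      ring
    · have hm2 : m = n + 2 := by omega
      subst hm2
      have h1' : rseq (n+2) ((Fin.last n : ℕ)+1) = n + 1 := by
        simp only [rseq, Fin.val_last]; rw [if_pos] ; omega
      have h2' : ∀ j : Fin n, rseq (n+2) ((j.castSucc : ℕ)+1) = (j:ℕ) + 1 := by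
        intro j; simp only [rseq, Fin.coe_castSucc]; rw [if_pos]; omega
      rw [h1', Finset.prod_congr rfl (fun j _ => h2' j)]
      have : ∏ j : Fin n, ((j:ℕ) + 1) = n.factorial :=
        (Fin.prod_univ_eq_prod_range (fun x => x + 1) n).trans
          (Finset.prod_range_add_one_eq_factorial n)
      rw [this, Nat.factorial_succ (n+1), Nat.factorial_succ n]
      ring

lemma fin_prod_id (n : ℕ) : ∏ j : Fin n, ((j:ℕ)+1) = n.factorial :=
  (Fin.prod_univ_eq_prod_range (fun x => x + 1) n).trans
    (Finset.prod_range_add_one_eq_factorial n)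

lemma main_lemma : ∀ ℓ κ : ℕ, κ ≤ ℓ + 1 →
    (∏ i : Fin ℓ, ∏ j ∈ Finset.Ioi i, ((rseq κ ((j:ℕ)+1) : ℝ) - (rseq κ ((i:ℕ)+1) : ℝ))) =
      (ℓ.choose (κ - 1) : ℝ) * ∏ j ∈ Finset.Ico 1 ℓ, (j.factorial : ℝ) := by
  intro ℓ
  induction ℓ with
  | zero => intro κ hκ; interval_cases κ <;> simp
  | succ n ih =>
    intro κ hκ
    rw [Fin.prod_univ_succ, Fin.prod_Ioi_zero]
    have inner : ∀ i : Fin n, (∏ j ∈ Finset.Ioi i.succ,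
        ((rseq κ ((j:ℕ)+1) : ℝ) - (rseq κ ((i.succ:ℕ)+1) : ℝ))) =
        ∏ j ∈ Finset.Ioi i, ((rseq (κ-1) ((j:ℕ)+1) : ℝ) - (rseq (κ-1) ((i:ℕ)+1) : ℝ)) := by
      intro i
      rw [Fin.prod_Ioi_succ]
      apply Finset.prod_congr rfl
      intro j _
      have hj : ((j.succ : Fin (n+1)) : ℕ) + 1 = (j:ℕ) + 2 := by simp [Fin.val_succ]
      have hi : ((i.succ : Fin (n+1)) : ℕ) + 1 = (i:ℕ) + 2 := by simp [Fin.val_succ]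
      rw [hj, hi, rseq_shift, rseq_shift]
      push_cast
      ring
    rw [Finset.prod_congr rfl (fun i _ => inner i), ih (κ-1) (by omega)]
    have hz : ((0 : Fin (n+1)) : ℕ) + 1 = 1 := by simp
    rcases Nat.lt_or_ge κ 2 with hk | hk
    · -- κ ≤ 1
      have hA : (∏ j : Fin n, ((rseq κ (((j.succ : Fin (n+1)) : ℕ) + 1) : ℝ)
          - (rseq κ (((0 : Fin (n+1)) : ℕ) + 1) : ℝ))) = (n.factorial : ℝ) := by
        calc (∏ j : Fin n, ((rseq κ (((j.succ : Fin (n+1)) : ℕ) + 1) : ℝ)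
              - (rseq κ (((0 : Fin (n+1)) : ℕ) + 1) : ℝ)))
            = ∏ j : Fin n, (((j:ℕ) + 1 : ℕ) : ℝ) := by
              apply Finset.prod_congr rfl
              intro j _
              have e1 : rseq κ (((0 : Fin (n+1)) : ℕ) + 1) = 2 := by
                rw [rseq, Fin.val_zero, if_neg]; omega
              have e2 : rseq κ (((j.succ : Fin (n+1)) : ℕ) + 1) = (j:ℕ) + 3 := by
                simp only [rseq, Fin.val_succ]; rw [if_neg]; omega
              rw [e1, e2]; push_cast; ring
          _ = (n.factorial : ℝ) := by rw [← Nat.cast_prod, fin_prod_id]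
      rw [hA]
      have e3 : κ - 1 = 0 := by omega
      rw [e3, Nat.choose_zero_right, Nat.choose_zero_right]
      rcases Nat.eq_zero_or_pos n with hn | hn
      · subst hn; simp
      · rw [Finset.prod_Ico_succ_top hn]; push_cast; ring
    · -- κ ≥ 2
      have hfac : ∀ j : Fin n, ((rseq κ (((j.succ : Fin (n+1)) : ℕ) + 1) : ℝ)
          - (rseq κ (((0 : Fin (n+1)) : ℕ) + 1) : ℝ))
          = ((rseq (κ-1) ((j:ℕ)+1) : ℕ) : ℝ) := by
        intro j
        have e1 : rseq κ (((0 : Fin (n+1)) : ℕ) + 1) = 1 := by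
          rw [rseq, Fin.val_zero, if_pos]; omega
        have e2 : (((j.succ : Fin (n+1)) : ℕ) + 1) = (j:ℕ) + 2 := by
          simp [Fin.val_succ]
        rw [e1, e2, rseq_shift]; push_cast; ring
      rw [Finset.prod_congr rfl (fun j _ => hfac j), ← Nat.cast_prod,
        ← Nat.cast_prod, ← Nat.cast_prod]
      norm_cast
      apply Nat.eq_of_mul_eq_mul_left (show 0 < κ - 1 by omega)
      have hnat := rseq_prod_aux n (κ-1) (by omega) (by omega)
      have key : (n+1) * n.choose (κ-2) = (n+1).choose (κ-1) * (κ-1) := by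
        have h := Nat.add_one_mul_choose_eq n (κ-2)
        simpa [Nat.succ_eq_add_one, show κ-2+1 = κ-1 by omega] using h
      have e4 : κ - 1 - 1 = κ - 2 := by omega
      rcases Nat.eq_zero_or_pos n with hn | hn
      · subst hn
        have : κ = 2 := by omega
        subst this
        simp
      · rw [Finset.prod_Ico_succ_top hn, e4]
        calc (κ-1) * ((∏ j : Fin n, rseq (κ-1) ((j:ℕ)+1)) *
              (n.choose (κ-2) * ∏ j ∈ Finset.Ico 1 n, j.factorial))
            = ((κ-1) * ∏ j : Fin n, rseq (κ-1) ((j:ℕ)+1)) *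
              (n.choose (κ-2) * ∏ j ∈ Finset.Ico 1 n, j.factorial) := by ring
          _ = (n+1).factorial * (n.choose (κ-2) * ∏ j ∈ Finset.Ico 1 n, j.factorial) := by
              rw [hnat]
          _ = ((n+1) * n.choose (κ-2)) * (n.factorial * ∏ j ∈ Finset.Ico 1 n, j.factorial) := by
              rw [Nat.factorial_succ]; ring
          _ = ((n+1).choose (κ-1) * (κ-1)) * (n.factorial * ∏ j ∈ Finset.Ico 1 n, j.factorial) := by
              rw [key]
          _ = (κ-1) * ((n+1).choose (κ-1) * ((∏ j ∈ Finset.Ico 1 n, j.factorial) * n.factorial)) := by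
              ring

theorem prod_rseq_diff (ℓ κ : ℕ) (hℓ : 1 ≤ ℓ) (hκ1 : 1 ≤ κ) (hκ : κ ≤ ℓ + 1) :
    ∏ p ∈ Finset.univ.filter (fun p : Fin ℓ × Fin ℓ => p.1 < p.2),
        ((rseq κ ((p.2 : ℕ) + 1) : ℝ) - (rseq κ ((p.1 : ℕ) + 1) : ℝ)) =
      (ℓ.choose (κ - 1) : ℝ) * ∏ j ∈ Finset.Ico 1 ℓ, (j.factorial : ℝ) := by
  have conv : ∏ p ∈ Finset.univ.filter (fun p : Fin ℓ × Fin ℓ => p.1 < p.2),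
        ((rseq κ ((p.2 : ℕ) + 1) : ℝ) - (rseq κ ((p.1 : ℕ) + 1) : ℝ)) =
      ∏ s ∈ Finset.univ.sigma (fun i : Fin ℓ => Finset.Ioi i),
        ((rseq κ ((s.2 : ℕ) + 1) : ℝ) - (rseq κ ((s.1 : ℕ) + 1) : ℝ)) := by
    refine Finset.prod_bij' (fun p _ => (⟨p.1, p.2⟩ : Σ _ : Fin ℓ, Fin ℓ))
      (fun s _ => (s.1, s.2)) ?_ ?_ ?_ ?_ ?_
    · intro a ha
      simp only [Finset.mem_filter, Finset.mem_univ, true_and] at ha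
      simp [Finset.mem_sigma, Finset.mem_Ioi, ha]
    · intro s hs
      simp only [Finset.mem_sigma, Finset.mem_univ, true_and, Finset.mem_Ioi] at hs
      simp [hs]
    · intro a _; rfl
    · intro s _; rfl
    · intro a _; rfl
  rw [conv]
  exact (Finset.prod_sigma' Finset.univ (fun i : Fin ℓ => Finset.Ioi i)
    (fun i j => ((rseq κ ((j:ℕ)+1) : ℝ) - (rseq κ ((i:ℕ)+1) : ℝ)))).symm.trans
    (main_lemma ℓ κ hκ)
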